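/- arXiv:2409.14782 — 3 statements merged into one kernel-verified Lean document; each statement's English description precedes it below -/
import Mathlib

section
/- For constants A > 0 and B > 0, the function F(x) = A·x / ln(1+Bx) is concave on x > 0. -/
open Real Set

-- key inequality: 2y ≤ (2+y) log(1+y) for y ≥ 0
lemma key_ineq (y : ℝ) (hy : 0 ≤ y) : 2*y ≤ (2+y) * Real.log (1+y) := by
  have hmain : MonotoneOn (fun y : ℝ => (2+y) * Real.log (1+y) - 2*y) (Ici 0) := by
    have hderiv : ∀ x ∈ Ici (0:ℝ), HasDerivAt (fun y : ℝ => (2+y) * Real.log (1+y) - 2*y)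
        (Real.log (1+x) + (2+x)/(1+x) - 2) x := by
      intro x hx
      have h1 : (0:ℝ) < 1 + x := by simp at hx; linarith
      have hl : HasDerivAt (fun y : ℝ => Real.log (1+y)) (1/(1+x)) x := by
        have := (Real.hasDerivAt_log h1.ne').comp x ((hasDerivAt_id x).const_add 1)
        exact this.congr_deriv (by simp)
      have := ((hasDerivAt_id x).const_add 2).mul hl
      have := this.sub ((hasDerivAt_id x).const_mul 2)
      refine this.congr_deriv ?_
      field_simp
      simp only [id_eq]
    apply monotoneOn_of_deriv_nonneg (convex_Ici 0)
    · exact fun x hx => (hderiv x hx).continuousAt.continuousWithinAt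
    · intro x hx
      rw [interior_Ici] at hx
      exact (hderiv x (mem_Ici.mpr (le_of_lt hx))).differentiableAt.differentiableWithinAt
    · intro x hx
      rw [interior_Ici] at hx
      rw [(hderiv x (mem_Ici.mpr (le_of_lt hx))).deriv]
      have h1 : (0:ℝ) < 1 + x := by linarith [mem_Ioi.mp hx]
      have hlog : x/(1+x) ≤ Real.log (1+x) := by
        have := Real.log_le_sub_one_of_pos (x := (1+x)⁻¹) (by positivity)
        rw [Real.log_inv] at this
        have h2 : (1+x)⁻¹ - 1 = -(x/(1+x)) := by field_simp; ring
        linarith [this.trans_eq h2]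
      have : (2+x)/(1+x) - 2 = -(x/(1+x)) := by field_simp; ring
      linarith
  have := hmain (self_mem_Ici) (mem_Ici.mpr hy) hy
  simp at this
  linarith

theorem stmt_0 (A B : ℝ) (hA : 0 < A) (hB : 0 < B) :
    ConcaveOn ℝ (Set.Ioi (0 : ℝ)) (fun x => A * x / Real.log (1 + B * x)) := by
  set f1 : ℝ → ℝ := fun x =>
    (A * Real.log (1+B*x) - A*x*(B/(1+B*x))) / (Real.log (1+B*x))^2 with hf1
  set f2 : ℝ → ℝ := fun x =>
    A*B*(B*x*Real.log (1+B*x) + 2*(B*x) - 2*(1+B*x)*Real.log (1+B*x)) /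
      ((1+B*x)^2 * (Real.log (1+B*x))^3) with hf2
  have hu : ∀ x : ℝ, x ∈ Ioi (0:ℝ) → 1 < 1 + B*x := by
    intro x hx; nlinarith [mem_Ioi.mp hx]
  have hL : ∀ x : ℝ, x ∈ Ioi (0:ℝ) → 0 < Real.log (1+B*x) := by
    intro x hx; exact Real.log_pos (hu x hx)
  have hlog' : ∀ x : ℝ, x ∈ Ioi (0:ℝ) →
      HasDerivAt (fun y : ℝ => Real.log (1+B*y)) (B/(1+B*x)) x := by
    intro x hx
    have h1 : (0:ℝ) < 1 + B*x := lt_trans one_pos (hu x hx)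
    have := (Real.hasDerivAt_log h1.ne').comp x
      (((hasDerivAt_id x).const_mul B).const_add 1)
    refine this.congr_deriv ?_
    field_simp
  have hd1 : ∀ x ∈ Ioi (0:ℝ),
      HasDerivAt (fun x => A * x / Real.log (1 + B * x)) (f1 x) x := by
    intro x hx
    have hLx := hL x hx
    have := ((hasDerivAt_id x).const_mul A).div (hlog' x hx) hLx.ne'
    exact this.congr_deriv (by simp [f1])
  have hd2 : ∀ x ∈ Ioi (0:ℝ), HasDerivAt f1 (f2 x) x := by
    intro x hx
    have hLx := hL x hx
    have hux : (0:ℝ) < 1 + B*x := lt_trans one_pos (hu x hx)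
    have hnum : HasDerivAt (fun y => A * Real.log (1+B*y) - A*y*(B/(1+B*y)))
        (A*(B/(1+B*x)) - (A*(B/(1+B*x)) + A*x*(-(B*B)/(1+B*x)^2))) x := by
      have h1 := (hlog' x hx).const_mul A
      have hq : HasDerivAt (fun y : ℝ => B/(1+B*y)) (-(B*B)/(1+B*x)^2) x := by
        have := (hasDerivAt_const x B).div
          (((hasDerivAt_id x).const_mul B).const_add 1) hux.ne'
        refine this.congr_deriv ?_
        simp only [id_eq]
        field_simp
        ring
      have h2 := ((hasDerivAt_id x).const_mul A).mul hq
      have := h1.sub h2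
      refine this.congr_deriv ?_
      simp only [id_eq]
      ring
    have hden : HasDerivAt (fun y => (Real.log (1+B*y))^2)
        (2*Real.log (1+B*x)*(B/(1+B*x))) x := by
      have := (hlog' x hx).pow 2
      refine this.congr_deriv ?_
      ring
    have := hnum.div hden (by positivity)
    refine this.congr_deriv ?_
    rw [hf2]
    have hLne := hLx.ne'
    have hune := hux.ne'
    field_simp
    ring
  have hnonpos : ∀ x ∈ interior (Ioi (0:ℝ)), f2 x ≤ 0 := by
    rw [interior_Ioi]
    intro x hx
    have hLx := hL x hx
    have hux : (0:ℝ) < 1 + B*x := lt_trans one_pos (hu x hx)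
    have hx' := mem_Ioi.mp hx
    have hkey := key_ineq (B*x) (mul_pos hB hx').le
    apply div_nonpos_of_nonpos_of_nonneg
    · have hfac : B*x*Real.log (1+B*x) + 2*(B*x) - 2*(1+B*x)*Real.log (1+B*x) ≤ 0 := by
        nlinarith [hkey]
      nlinarith [mul_nonneg (mul_pos hA hB).le (neg_nonneg.mpr hfac)]
    · positivity
  apply concaveOn_of_hasDerivWithinAt2_nonpos (f' := f1) (f'' := f2) (convex_Ioi 0)
  · intro x hx
    exact (hd1 x hx).continuousAt.continuousWithinAt
  · rw [interior_Ioi]; exact fun x hx => (hd1 x hx).hasDerivWithinAt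
  · rw [interior_Ioi]; exact fun x hx => (hd2 x hx).hasDerivWithinAt
  · exact hnonpos
end

section
/- For constants A > 0 and B > 0, define G(x) = 2AB²x − (AB²x + 2AB)·ln(1+Bx). Then G(x) ≤ 0 for all x ≥ 0. -/
lemma key_log_ineq (t : ℝ) (ht : 0 ≤ t) : 2 * t ≤ (t + 2) * Real.log (1 + t) := by
  set f : ℝ → ℝ := fun s => (s + 2) * Real.log (1 + s) - 2 * s with hf
  have hd : ∀ s : ℝ, 0 < s →
      HasDerivAt f (Real.log (1 + s) + (s + 2) * (1 + s)⁻¹ - 2) s := by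
    intro s hs
    have hs1 : (1 : ℝ) + s ≠ 0 := by linarith
    have h1 : HasDerivAt (fun s : ℝ => 1 + s) 1 s := (hasDerivAt_id s).const_add 1
    have hlog : HasDerivAt (fun s : ℝ => Real.log (1 + s)) (1 * (1 + s)⁻¹) s := by
      simpa using h1.log hs1
    have h2 : HasDerivAt (fun s : ℝ => s + 2) 1 s := (hasDerivAt_id s).add_const 2
    have := (h2.mul hlog).sub ((hasDerivAt_id s).const_mul 2)
    exact this.congr_deriv (by ring)
  have hmono : MonotoneOn f (Set.Ici (0:ℝ)) := by
    apply monotoneOn_of_deriv_nonneg (convex_Ici 0)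
    · apply ContinuousOn.sub
      · apply ContinuousOn.mul (Continuous.continuousOn (by continuity))
        apply Real.continuousOn_log.comp (Continuous.continuousOn (by continuity))
        intro s hs
        simp only [Set.mem_Ici] at hs
        simp only [Set.mem_compl_iff, Set.mem_singleton_iff]
        intro h; linarith [h]
      · exact (continuous_const.mul continuous_id).continuousOn
    · intro s hs
      rw [interior_Ici] at hs
      exact (hd s hs).differentiableAt.differentiableWithinAt
    · intro s hs
      rw [interior_Ici] at hs
      simp only [Set.mem_Ioi] at hs
      rw [(hd s hs).deriv]
      have hs1 : (0 : ℝ) < 1 + s := by linarith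
      have hlb : s / (1 + s) ≤ Real.log (1 + s) := by
        have := Real.log_le_sub_one_of_pos (x := (1 + s)⁻¹) (by positivity)
        rw [Real.log_inv] at this
        have : -( (1+s)⁻¹ - 1) ≤ Real.log (1 + s) := by linarith
        calc s / (1 + s) = -((1+s)⁻¹ - 1) := by field_simp; ring
          _ ≤ _ := this
      have : (s + 2) * (1 + s)⁻¹ - 2 = -(s / (1 + s)) := by field_simp; ring
      linarith [hlb, this]
  have h0 : f 0 = 0 := by simp [hf]
  have := hmono (Set.self_mem_Ici) (Set.mem_Ici.mpr ht) ht
  rw [h0] at this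
  simpa [hf] using this

theorem stmt_1 (A B : ℝ) (hA : 0 < A) (hB : 0 < B) (x : ℝ) (hx : 0 ≤ x) :
    2 * A * B ^ 2 * x - (A * B ^ 2 * x + 2 * A * B) * Real.log (1 + B * x) ≤ 0 := by
  have ht : 0 ≤ B * x := mul_nonneg hB.le hx
  have h := key_log_ineq (B * x) ht
  nlinarith [mul_le_mul_of_nonneg_left h (mul_nonneg hA.le hB.le)]
end

section
/- Let I be a finite index set, A_i : X → ℝ≥0 and B_i : X → ℝ>0 functions on a set X. Then sup_{x∈X} Σ_i A_i(x)/B_i(x) = sup_{x∈X} sup_{y∈ℝ^I} Σ_i (2 y_i √(A_i(x)) − y_i² B_i(x)), and for fixed x the inner supremum over y is attained at y_i = √(A_i(x))/B_i(x). -/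
lemma qt_le (a b y : ℝ) (ha : 0 ≤ a) (hb : 0 < b) :
    2 * y * Real.sqrt a - y ^ 2 * b ≤ a / b := by
  rw [le_div_iff₀ hb]
  nlinarith [sq_nonneg (Real.sqrt a - y * b), Real.sq_sqrt ha, Real.sqrt_nonneg a]

lemma qt_eq (a b : ℝ) (ha : 0 ≤ a) (hb : 0 < b) :
    2 * (Real.sqrt a / b) * Real.sqrt a - (Real.sqrt a / b) ^ 2 * b = a / b := by
  have h := Real.sq_sqrt ha
  field_simp
  linear_combination h

theorem stmt_8 {ι X : Type*} [Fintype ι] (A B : ι → X → ℝ)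
    (hA : ∀ i x, 0 ≤ A i x) (hB : ∀ i x, 0 < B i x) :
    (⨆ x : X, ∑ i, A i x / B i x)
      = (⨆ x : X, ⨆ y : ι → ℝ, ∑ i, (2 * y i * Real.sqrt (A i x) - (y i) ^ 2 * B i x)) ∧
    ∀ x : X, ∀ y : ι → ℝ,
      ∑ i, (2 * y i * Real.sqrt (A i x) - (y i) ^ 2 * B i x)
        ≤ ∑ i, (2 * (Real.sqrt (A i x) / B i x) * Real.sqrt (A i x)
              - (Real.sqrt (A i x) / B i x) ^ 2 * B i x) := by
  have hle : ∀ (x : X) (y : ι → ℝ),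
      ∑ i, (2 * y i * Real.sqrt (A i x) - (y i) ^ 2 * B i x) ≤ ∑ i, A i x / B i x :=
    fun x y => Finset.sum_le_sum fun i _ => qt_le _ _ _ (hA i x) (hB i x)
  have hval : ∀ x : X,
      ∑ i, (2 * (Real.sqrt (A i x) / B i x) * Real.sqrt (A i x)
              - (Real.sqrt (A i x) / B i x) ^ 2 * B i x) = ∑ i, A i x / B i x :=
    fun x => Finset.sum_congr rfl fun i _ => qt_eq _ _ (hA i x) (hB i x)
  have hkey : ∀ x : X,
      (⨆ y : ι → ℝ, ∑ i, (2 * y i * Real.sqrt (A i x) - (y i) ^ 2 * B i x))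
        = ∑ i, A i x / B i x := by
    intro x
    refine le_antisymm (ciSup_le (hle x)) ?_
    have hbdd : BddAbove (Set.range fun y : ι → ℝ =>
        ∑ i, (2 * y i * Real.sqrt (A i x) - (y i) ^ 2 * B i x)) :=
      ⟨∑ i, A i x / B i x, by rintro z ⟨y, rfl⟩; exact hle x y⟩
    calc ∑ i, A i x / B i x = _ := (hval x).symm
      _ ≤ _ := le_ciSup hbdd (fun i => Real.sqrt (A i x) / B i x)
  refine ⟨(iSup_congr hkey).symm, fun x y => ?_⟩
  rw [hval x]; exact hle x y
end
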